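/- Let G be a simple graph on n vertices containing k + 1 distinct vertices each of degree at least (1 - 1/(2k))n, with k ≥ 1 and (k+1)(1 - 1/(2k))n - kn ≥ 2k + 2. Then G contains every tree on 2k + 3 vertices as a subgraph. -/

import Mathlib

open SimpleGraph Finset

/-- The signless Laplacian matrix `Q(G) = D(G) + A(G)` over `ℝ`. -/
def signlessLaplacian {V : Type*} [Fintype V] [DecidableEq V] (G : SimpleGraph V)
    [DecidableRel G.Adj] : Matrix V V ℝ :=
  SimpleGraph.degMatrix ℝ G + G.adjMatrix ℝ

/-- `q` is the largest eigenvalue of the real matrix `M`. -/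
def IsMaxEigenvalue {V : Type*} [Fintype V] [DecidableEq V] (M : Matrix V V ℝ) (q : ℝ) : Prop :=
  Module.End.HasEigenvalue (Matrix.toLin' M) q ∧
    ∀ μ : ℝ, Module.End.HasEigenvalue (Matrix.toLin' M) μ → μ ≤ q

/-- `S_{n,k}`: the join of `K_k` with an empty graph on `n - k` vertices. -/
def Snk (n k : ℕ) : SimpleGraph (Fin n) where
  Adj u v := u ≠ v ∧ (u.val < k ∨ v.val < k)
  symm := ⟨fun u v ⟨h1, h2⟩ => ⟨h1.symm, h2.symm⟩⟩
  loopless := ⟨fun u ⟨h, _⟩ => h rfl⟩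

instance (n k : ℕ) : DecidableRel (Snk n k).Adj := fun u v =>
  inferInstanceAs (Decidable (u ≠ v ∧ (u.val < k ∨ v.val < k)))

/-- `S_{n,k}^+`: `S_{n,k}` plus one edge inside the independent set (between
vertices `k` and `k+1`). -/
def SnkPlus (n k : ℕ) : SimpleGraph (Fin n) where
  Adj u v := u ≠ v ∧ (u.val < k ∨ v.val < k ∨ (u.val ≤ k + 1 ∧ v.val ≤ k + 1))
  symm := ⟨fun u v ⟨h1, h2⟩ => ⟨h1.symm, by tauto⟩⟩
  loopless := ⟨fun u ⟨h, _⟩ => h rfl⟩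

instance (n k : ℕ) : DecidableRel (SnkPlus n k).Adj := fun u v =>
  inferInstanceAs (Decidable (u ≠ v ∧ (u.val < k ∨ v.val < k ∨ (u.val ≤ k + 1 ∧ v.val ≤ k + 1))))

/-- `T` is contained in `G` as a subgraph: there is an injective graph homomorphism. -/
def ContainsSub {α β : Type*} (T : SimpleGraph α) (G : SimpleGraph β) : Prop :=
  ∃ f : T →g G, Function.Injective f

lemma tree_path_length {α : Type*} {T : SimpleGraph α} (hT : T.IsTree) {u w : α}
    (p : T.Walk u w) (hp : p.IsPath) : p.length = T.dist u w := by
  obtain ⟨q, hq, hl⟩ := hT.isConnected.exists_path_of_dist u w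
  have huniq := hT.existsUnique_path u w
  rw [huniq.unique hp hq, hl]

lemma tree_adj_dist {α : Type*} [DecidableEq α] {T : SimpleGraph α} (hT : T.IsTree) (r : α) {u w : α}
    (h : T.Adj u w) : T.dist r w = T.dist r u + 1 ∨ T.dist r u = T.dist r w + 1 := by
  obtain ⟨p, hp, hl⟩ := hT.isConnected.exists_path_of_dist r u
  by_cases hw : w ∈ p.support
  · right
    have h1 : (p.takeUntil w hw).length = T.dist r w :=
      tree_path_length hT _ (hp.takeUntil hw)
    have h2 : (p.dropUntil w hw).length = T.dist w u :=
      tree_path_length hT _ (hp.dropUntil hw)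
    have h3 : T.dist w u = 1 := by
      have : (SimpleGraph.Walk.cons (h.symm) SimpleGraph.Walk.nil : T.Walk w u).length
          = T.dist w u := tree_path_length hT _ (by simp [SimpleGraph.Walk.cons_isPath_iff, h.symm.ne])
      simpa using this.symm
    have h4 := congr_arg SimpleGraph.Walk.length (p.take_spec hw)
    rw [SimpleGraph.Walk.length_append] at h4
    omega
  · left
    have hpath : (p.concat h).IsPath := by
      rw [← SimpleGraph.Walk.isPath_reverse_iff, SimpleGraph.Walk.reverse_concat]
      exact (hp.reverse).cons (by simpa using hw)
    have := tree_path_length hT _ hpath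
    rw [SimpleGraph.Walk.length_concat, hl] at this
    omega

theorem stmt_15 (k n : ℕ) (hk : 1 ≤ k)
    {V : Type*} [Fintype V] [DecidableEq V] (G : SimpleGraph V) [DecidableRel G.Adj]
    (hcard : Fintype.card V = n) (v : Fin (k + 1) → V) (hinj : Function.Injective v)
    (hdeg : ∀ i, ((1 : ℝ) - 1 / (2 * k)) * n ≤ (G.degree (v i) : ℝ))
    (hbig : (2 * (k : ℝ) + 2) ≤ ((k : ℝ) + 1) * (1 - 1 / (2 * k)) * n - k * n)
    {α : Type*} [Fintype α] (T : SimpleGraph α) (hT : T.IsTree)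
    (hTcard : Fintype.card α = 2 * k + 3) :
    ContainsSub T G := by
  classical
  -- the common neighborhood S
  set S : Finset V := Finset.univ.filter (fun w => ∀ i, G.Adj (v i) w) with hS
  have hvS : ∀ i, v i ∉ S := by
    intro i hi
    exact G.irrefl ((Finset.mem_filter.mp hi).2 i)
  -- |S| ≥ 2k+2
  have hScard : 2 * k + 2 ≤ S.card := by
    have hsub : Finset.univ \ S ⊆
        Finset.univ.biUnion (fun i : Fin (k+1) => Finset.univ \ G.neighborFinset (v i)) := by
      intro w hw
      simp only [hS, Finset.mem_sdiff, Finset.mem_filter, Finset.mem_univ, true_and,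
        not_forall] at hw
      obtain ⟨i, hi⟩ := hw
      simp only [Finset.mem_biUnion, Finset.mem_univ, true_and, Finset.mem_sdiff,
        SimpleGraph.mem_neighborFinset]
      exact ⟨i, hi⟩
    have hcompl : (Finset.univ \ S).card ≤ ∑ i : Fin (k+1), (n - G.degree (v i)) := by
      calc (Finset.univ \ S).card ≤ _ := Finset.card_le_card hsub
        _ ≤ ∑ i : Fin (k+1), (Finset.univ \ G.neighborFinset (v i)).card :=
            Finset.card_biUnion_le
        _ = ∑ i : Fin (k+1), (n - G.degree (v i)) := by
            refine Finset.sum_congr rfl fun i _ => ?_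
            rw [Finset.card_sdiff_of_subset (Finset.subset_univ _), Finset.card_univ, hcard,
              SimpleGraph.card_neighborFinset_eq_degree]
    have hdegle : ∀ i, G.degree (v i) ≤ n := by
      intro i
      rw [← hcard, ← SimpleGraph.card_neighborFinset_eq_degree]
      exact Finset.card_le_univ _
    have htot : (Finset.univ \ S).card + S.card = n := by
      rw [Finset.card_sdiff_add_card_eq_card (Finset.subset_univ _), Finset.card_univ, hcard]
    -- real arithmetic
    have hreal : (2 * (k:ℝ) + 2) ≤ (S.card : ℝ) := by
      have h1 : ((Finset.univ \ S).card : ℝ) ≤ ∑ i : Fin (k+1), ((n:ℝ) - G.degree (v i)) := by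
        calc ((Finset.univ \ S).card : ℝ) ≤ (∑ i : Fin (k+1), (n - G.degree (v i)) : ℕ) := by
              exact_mod_cast hcompl
          _ = ∑ i : Fin (k+1), ((n:ℝ) - G.degree (v i)) := by
              push_cast [Nat.cast_sub (hdegle _)]
              rfl
      have h2 : ∑ i : Fin (k+1), ((n:ℝ) - G.degree (v i)) ≤
          ∑ i : Fin (k+1), ((n:ℝ) - (1 - 1 / (2 * k)) * n) := by
        refine Finset.sum_le_sum fun i _ => ?_
        linarith [hdeg i]
      have h3 : ∑ i : Fin (k+1), ((n:ℝ) - (1 - 1 / (2 * k)) * n)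
          = ((k:ℝ)+1) * ((n:ℝ) - (1 - 1 / (2 * k)) * n) := by
        rw [Finset.sum_const, Finset.card_univ, Fintype.card_fin]
        push_cast
        ring
      have h4 : (S.card : ℝ) = n - ((Finset.univ \ S).card : ℝ) := by
        have := htot; push_cast [← this]; ring
      rw [h4]
      nlinarith [h1, h2, h3, hbig]
    exact_mod_cast hreal
  -- 2-coloring of the tree
  obtain ⟨r⟩ : Nonempty α := Fintype.card_pos_iff.mp (by omega)
  set c : α → Bool := fun a => decide (T.dist r a % 2 = 0) with hc
  have hcvalid : ∀ {x y : α}, T.Adj x y → c x ≠ c y := by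
    intro x y hxy
    rcases tree_adj_dist hT r hxy with h | h <;> simp only [hc, ne_eq, decide_eq_decide] <;> omega
  -- both color classes are nonempty
  have hedge : ∃ x y : α, T.Adj x y := by
    obtain ⟨x, y, hxy⟩ := Fintype.exists_pair_of_one_lt_card (α := α) (by omega)
    obtain ⟨w⟩ := hT.isConnected x y
    cases w with
    | nil => exact absurd rfl hxy
    | cons h _ => exact ⟨_, _, h⟩
  obtain ⟨x₀, y₀, hxy₀⟩ := hedge
  have hboth : ∀ bb : Bool, (Finset.univ.filter (fun a => c a = bb)).Nonempty := by
    intro bb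
    have hne := hcvalid hxy₀
    have : bb = c x₀ ∨ bb = c y₀ := by
      revert hne
      generalize c x₀ = p
      generalize c y₀ = q
      cases bb <;> cases p <;> cases q <;> simp
    rcases this with rfl | rfl
    · exact ⟨x₀, by simp⟩
    · exact ⟨y₀, by simp⟩
  have hsplit : (Finset.univ.filter (fun a => c a = true)).card
      + (Finset.univ.filter (fun a => c a = false)).card = 2 * k + 3 := by
    rw [← hTcard, ← Finset.card_univ]
    have : (Finset.univ.filter (fun a => c a = false))
        = Finset.univ.filter (fun a => ¬ c a = true) := by
      ext a; simp [Bool.not_eq_true]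
    rw [this, Finset.card_filter_add_card_filter_not]
  -- choose the small side
  set b : Bool := if (Finset.univ.filter (fun a => c a = true)).card ≤ k + 1 then true else false
    with hb
  set P : Finset α := Finset.univ.filter (fun a => c a = b) with hP
  set Q : Finset α := Finset.univ.filter (fun a => c a ≠ b) with hQ
  have hPQ : P.card + Q.card = 2 * k + 3 := by
    rw [hP, hQ, ← hTcard, ← Finset.card_univ, Finset.card_filter_add_card_filter_not]
  have hPcard : P.card ≤ k + 1 := by
    by_cases hh : (Finset.univ.filter (fun a => c a = true)).card ≤ k + 1
    · simp only [hP, hb, if_pos hh]; exact hh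
    · simp only [hP, hb, if_neg hh]
      omega
  have hPne : P.Nonempty := hboth b
  have hQcard : Q.card ≤ 2 * k + 2 := by
    have := hPne.card_pos; omega
  -- embeddings
  obtain ⟨g⟩ : Nonempty ({a // a ∈ P} ↪ Fin (k + 1)) := by
    apply Function.Embedding.nonempty_of_card_le
    simpa [Fintype.card_coe] using hPcard
  obtain ⟨e⟩ : Nonempty ({a // a ∈ Q} ↪ {w // w ∈ S}) := by
    apply Function.Embedding.nonempty_of_card_le
    simp only [Fintype.card_coe]
    omega
  have hmemQ : ∀ {a : α}, a ∉ P → a ∈ Q := by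
    intro a ha
    simp only [hP, Finset.mem_filter, Finset.mem_univ, true_and] at ha
    simp only [hQ, Finset.mem_filter, Finset.mem_univ, true_and]
    exact ha
  set f : α → V := fun a => if h : a ∈ P then v (g ⟨a, h⟩) else (e ⟨a, hmemQ h⟩ : V) with hf
  -- key adjacency fact
  have hadjf : ∀ {x y : α}, T.Adj x y → G.Adj (f x) (f y) := by
    intro x y hxy
    have hne := hcvalid hxy
    by_cases hx : x ∈ P
    · have hy : y ∉ P := by
        intro hy
        simp only [hP, Finset.mem_filter] at hx hy
        exact hne (hx.2.trans hy.2.symm)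
      simp only [hf, dif_pos hx, dif_neg hy]
      have := (e ⟨y, hmemQ hy⟩).2
      simp only [hS, Finset.mem_filter] at this
      exact this.2 _
    · have hy : y ∈ P := by
        have hx' := hmemQ hx
        simp only [hQ, Finset.mem_filter, Finset.mem_univ, true_and] at hx'
        simp only [hP, Finset.mem_filter, Finset.mem_univ, true_and]
        revert hx' hne
        generalize c x = p
        generalize c y = q
        generalize b = bb
        cases bb <;> cases p <;> cases q <;> simp
      simp only [hf, dif_neg hx, dif_pos hy]
      apply G.adj_symm
      have := (e ⟨x, hmemQ hx⟩).2
      simp only [hS, Finset.mem_filter] at this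
      exact this.2 _
  have hfinj : Function.Injective f := by
    intro x y hxy
    by_cases hx : x ∈ P <;> by_cases hy : y ∈ P
    · simp only [hf, dif_pos hx, dif_pos hy] at hxy
      have := g.injective (hinj hxy)
      exact Subtype.ext_iff.mp this
    · exfalso
      simp only [hf, dif_pos hx, dif_neg hy] at hxy
      exact hvS _ (hxy ▸ (e ⟨y, hmemQ hy⟩).2)
    · exfalso
      simp only [hf, dif_neg hx, dif_pos hy] at hxy
      exact hvS _ (hxy ▸ (e ⟨x, hmemQ hx⟩).2)
    · simp only [hf, dif_neg hx, dif_neg hy] at hxy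
      have := e.injective (Subtype.ext hxy)
      exact Subtype.ext_iff.mp this
  exact ⟨⟨f, fun h => hadjf h⟩, hfinj⟩
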